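/- Let A, B be m×n matrices over the max-plus semiring with m rows, and let x be a regular solution of Ax ≤ Bx with B row-regular. Then there exists a strictly row-monomial matrix G, obtained from B by keeping in each row i exactly one entry b_{i,q(i)} ≠ -∞, such that x satisfies x ≥ G⁻(A ⊕ B)x; in particular H = G⁻(A ⊕ B) satisfies Hx ≤ x and hence max(tr H, …, tr Hⁿ) ≤ 0. -/

import Mathlib

noncomputable section

/-- The max-plus carrier: ℝ ∪ {-∞}, with ⊥ playing the role of -∞. -/
abbrev MP := WithBot ℝ

/-- Max-plus matrix product: (A⊗B)_ik = max_j (a_ij + b_jk). -/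
def mpMul {m n p : ℕ} (A : Matrix (Fin m) (Fin n) MP) (B : Matrix (Fin n) (Fin p) MP) :
    Matrix (Fin m) (Fin p) MP :=
  fun i k => Finset.univ.sup fun j => A i j + B j k

/-- Max-plus matrix-vector product: (Ax)_i = max_j (a_ij + x_j). -/
def mpMulVec {m n : ℕ} (A : Matrix (Fin m) (Fin n) MP) (x : Fin n → MP) : Fin m → MP :=
  fun i => Finset.univ.sup fun j => A i j + x j

/-- Conjugate (multiplicative inverse transpose): (A⁻)_ij = -a_ji if a_ji ≠ -∞, else -∞. -/
def mpConj {m n : ℕ} (A : Matrix (Fin m) (Fin n) MP) : Matrix (Fin n) (Fin m) MP :=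
  fun i j => (A j i).map fun r => -r

/-- Tropical identity matrix: 0 on the diagonal, -∞ elsewhere. -/
def mpId (n : ℕ) : Matrix (Fin n) (Fin n) MP :=
  fun i j => if i = j then (0 : MP) else ⊥

/-- Tropical matrix powers, A⁰ = I. -/
def mpPow {n : ℕ} (A : Matrix (Fin n) (Fin n) MP) : ℕ → Matrix (Fin n) (Fin n) MP
  | 0 => mpId n
  | k + 1 => mpMul A (mpPow A k)

/-- Tropical trace: tr A = max_i a_ii. -/
def mpTr {n : ℕ} (A : Matrix (Fin n) (Fin n) MP) : MP :=
  Finset.univ.sup fun i => A i i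

/-- Tr(A) = tr A ⊕ tr A² ⊕ ⋯ ⊕ tr Aⁿ. -/
def mpTrFun {n : ℕ} (A : Matrix (Fin n) (Fin n) MP) : MP :=
  (Finset.Icc 1 n).sup fun k => mpTr (mpPow A k)

/-- Bounded Kleene star: A* = I ⊕ A ⊕ ⋯ ⊕ A^{n-1}. -/
def mpStar {n : ℕ} (A : Matrix (Fin n) (Fin n) MP) : Matrix (Fin n) (Fin n) MP :=
  fun i j => (Finset.range n).sup fun k => mpPow A k i j

/-- Entrywise max of matrices: A ⊕ B. -/
def mpAdd {m n : ℕ} (A B : Matrix (Fin m) (Fin n) MP) : Matrix (Fin m) (Fin n) MP :=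
  fun i j => A i j ⊔ B i j

/-- Strictly row-monomial: exactly one entry ≠ -∞ in each row. -/
def RowMonomial {m n : ℕ} (A : Matrix (Fin m) (Fin n) MP) : Prop :=
  ∀ i, ∃! j, A i j ≠ ⊥

/-- Row-regular: at least one entry ≠ -∞ in each row. -/
def RowRegular {m n : ℕ} (A : Matrix (Fin m) (Fin n) MP) : Prop :=
  ∀ i, ∃ j, A i j ≠ ⊥

/-- Regular vector: all entries finite. -/
def Regular {n : ℕ} (x : Fin n → MP) : Prop := ∀ j, x j ≠ ⊥

lemma mp_max_add (a b c : MP) : (a ⊔ b) + c = (a + c) ⊔ (b + c) := by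
  rcases le_total a b with h|h
  · rw [sup_eq_right.2 h, sup_eq_right.2 (add_le_add_left h c)]
  · rw [sup_eq_left.2 h, sup_eq_left.2 (add_le_add_left h c)]

lemma mp_add_max (a b c : MP) : c + (a ⊔ b) = (c + a) ⊔ (c + b) := by
  simpa [add_comm] using mp_max_add a b c

lemma mp_sup_add {α : Type*} [DecidableEq α] (s : Finset α) (f : α → MP) (c : MP) :
    s.sup f + c = s.sup (fun a => f a + c) := by
  induction s using Finset.induction with
  | empty => simp
  | insert _ _ h ih => simp [Finset.sup_insert, ← ih, mp_max_add]

lemma mp_add_sup {α : Type*} [DecidableEq α] (s : Finset α) (f : α → MP) (c : MP) :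
    c + s.sup f = s.sup (fun a => c + f a) := by
  induction s using Finset.induction with
  | empty => simp
  | insert _ _ h ih => simp [Finset.sup_insert, ← ih, mp_add_max]

lemma mp_cancel (a b : MP) (c : ℝ) (h : a + (c : MP) ≤ b + (c : MP)) : a ≤ b := by
  have := add_le_add_left h (((-c : ℝ)) : MP)
  simpa [add_assoc, ← WithBot.coe_add] using this

lemma mpMulVec_mul {m' n' p : ℕ} (P : Matrix (Fin m') (Fin n') MP)
    (Q : Matrix (Fin n') (Fin p) MP) (x : Fin p → MP) (i : Fin m') :
    mpMulVec (mpMul P Q) x i = mpMulVec P (mpMulVec Q x) i := by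
  simp only [mpMulVec, mpMul, mp_sup_add, mp_add_sup, add_assoc]
  exact Finset.sup_comm _ _ _

lemma mpMulVec_mono {m' n' : ℕ} (P : Matrix (Fin m') (Fin n') MP)
    {x y : Fin n' → MP} (hxy : ∀ j, x j ≤ y j) (i : Fin m') :
    mpMulVec P x i ≤ mpMulVec P y i := by
  exact Finset.sup_mono_fun fun j _ => add_le_add_right (hxy j) _

lemma mpMulVec_id {n' : ℕ} (x : Fin n' → MP) (i : Fin n') :
    mpMulVec (mpId n') x i = x i := by
  unfold mpMulVec mpId
  apply le_antisymm
  · exact Finset.sup_le fun j _ => by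
      by_cases hij : i = j <;> simp [hij]
  · exact le_trans (by simp) (Finset.le_sup (Finset.mem_univ i))

lemma mp_trace_bound {n' : ℕ} (H : Matrix (Fin n') (Fin n') MP)
    (x : Fin n' → MP) (hx : Regular x)
    (hHx : ∀ j, mpMulVec H x j ≤ x j) : mpTrFun H ≤ 0 := by
  have hpow : ∀ k j, mpMulVec (mpPow H k) x j ≤ x j := by
    intro k
    induction k with
    | zero => intro j; rw [mpPow, mpMulVec_id]
    | succ k ih =>
      intro j
      rw [mpPow, mpMulVec_mul]
      exact le_trans (mpMulVec_mono H ih j) (hHx j)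
  refine Finset.sup_le fun k _ => Finset.sup_le fun i _ => ?_
  obtain ⟨r, hr⟩ := Option.ne_none_iff_exists'.1 (hx i)
  have h1 : mpPow H k i i + x i ≤ x i := by
    refine le_trans ?_ (hpow k i)
    exact Finset.le_sup (f := fun j => mpPow H k i j + x j) (Finset.mem_univ i)
  rw [hr] at h1
  have := mp_cancel (mpPow H k i i) 0 r (by rw [zero_add]; exact h1)
  simpa using this

theorem stmt14 {m n : ℕ} (A B : Matrix (Fin m) (Fin n) MP) (hB : RowRegular B)
    (x : Fin n → MP) (hx : Regular x)
    (h : ∀ i, mpMulVec A x i ≤ mpMulVec B x i) :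
    ∃ G : Matrix (Fin m) (Fin n) MP, RowMonomial G ∧
      (∀ i j, G i j ≠ ⊥ → G i j = B i j) ∧
      (∀ j, mpMulVec (mpMul (mpConj G) (mpAdd A B)) x j ≤ x j) ∧
      mpTrFun (mpMul (mpConj G) (mpAdd A B)) ≤ 0 := by
  -- choose q i attaining the max of B i j + x j
  have hq : ∀ i : Fin m, ∃ q : Fin n, B i q ≠ ⊥ ∧
      (∀ j, B i j + x j ≤ B i q + x q) := by
    intro i
    obtain ⟨j0, hj0⟩ := hB i
    obtain ⟨q, -, hqe⟩ := Finset.exists_mem_eq_sup Finset.univ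
      ⟨j0, Finset.mem_univ j0⟩ (fun j => B i j + x j)
    refine ⟨q, ?_, fun j => (Finset.le_sup (f := fun j => B i j + x j) (Finset.mem_univ j)).trans_eq hqe⟩
    intro hbot
    have h1 : B i j0 + x j0 ≤ B i q + x q := (Finset.le_sup (f := fun j => B i j + x j) (Finset.mem_univ j0)).trans_eq hqe
    rw [hbot] at h1
    simp only [WithBot.bot_add, le_bot_iff] at h1
    exact absurd (WithBot.add_eq_bot.1 h1) (by simp [hj0, hx j0])
  choose q hqne hqmax using hq
  classical
  refine ⟨fun i j => if j = q i then B i j else ⊥, ?_, ?_, ?_, ?_⟩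
  · intro i
    exact ⟨q i, by simpa using hqne i, fun j hj => by
      by_contra hne; simp [hne] at hj⟩
  · intro i j hj
    by_cases hje : j = q i
    · simp [hje]
    · simp [hje] at hj
  · -- the key inequality Hx ≤ x
    intro j
    refine Finset.sup_le fun k _ => ?_
    simp only [mpMul, mp_sup_add]
    refine Finset.sup_le fun i _ => ?_
    -- term: mpConj G j i + mpAdd A B i k + x k ≤ x j
    by_cases hji : j = q i
    · subst hji
      obtain ⟨b, hb⟩ := Option.ne_none_iff_exists'.1 (hqne i)
      have hAk : A i k + x k ≤ B i (q i) + x (q i) :=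
        le_trans (Finset.le_sup (f := fun j => A i j + x j) (Finset.mem_univ k))
          (le_trans (h i) (Finset.sup_le fun j _ => hqmax i j))
      have hBk : B i k + x k ≤ B i (q i) + x (q i) := hqmax i k
      have hmax : mpAdd A B i k + x k ≤ (b : MP) + x (q i) := by
        rw [mpAdd, mp_max_add]
        rw [hb] at hAk hBk
        exact sup_le hAk hBk
      have hconj : mpConj (fun i j => if j = q i then B i j else ⊥) (q i) i
          = ((-b : ℝ) : MP) := by
        simp only [mpConj]
        rw [if_pos trivial, hb]
        rfl
      rw [hconj, add_assoc]
      calc ((-b : ℝ) : MP) + (mpAdd A B i k + x k)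
          ≤ ((-b : ℝ) : MP) + ((b : MP) + x (q i)) := add_le_add_right hmax _
        _ = x (q i) := by rw [← add_assoc, ← WithBot.coe_add]; simp
    · have : mpConj (fun i j => if j = q i then B i j else ⊥) j i = ⊥ := by
        simp [mpConj, Ne.symm hji, hji]
      simp [this]
  · -- trace bound
    apply mp_trace_bound _ x hx
    intro j
    refine Finset.sup_le fun k _ => ?_
    simp only [mpMul, mp_sup_add]
    refine Finset.sup_le fun i _ => ?_
    by_cases hji : j = q i
    · subst hji
      obtain ⟨b, hb⟩ := Option.ne_none_iff_exists'.1 (hqne i)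
      have hAk : A i k + x k ≤ B i (q i) + x (q i) :=
        le_trans (Finset.le_sup (f := fun j => A i j + x j) (Finset.mem_univ k))
          (le_trans (h i) (Finset.sup_le fun j _ => hqmax i j))
      have hBk : B i k + x k ≤ B i (q i) + x (q i) := hqmax i k
      have hmax : mpAdd A B i k + x k ≤ (b : MP) + x (q i) := by
        rw [mpAdd, mp_max_add]
        rw [hb] at hAk hBk
        exact sup_le hAk hBk
      have hconj : mpConj (fun i j => if j = q i then B i j else ⊥) (q i) i
          = ((-b : ℝ) : MP) := by
        simp only [mpConj]
        rw [if_pos trivial, hb]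
        rfl
      rw [hconj, add_assoc]
      calc ((-b : ℝ) : MP) + (mpAdd A B i k + x k)
          ≤ ((-b : ℝ) : MP) + ((b : MP) + x (q i)) := add_le_add_right hmax _
        _ = x (q i) := by rw [← add_assoc, ← WithBot.coe_add]; simp
    · have : mpConj (fun i j => if j = q i then B i j else ⊥) j i = ⊥ := by
        simp [mpConj, Ne.symm hji, hji]
      simp [this]
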